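/- In the game (R_S, C_S) above, if (x, y) is an ε-WNE for ε ∈ [0, 1/3), and σ(x^L), σ(y^L), σ(x^R), σ(y^R) all lie in [1/3, 2/3], then (x^L/σ(x^L), y^L/σ(y^L)) is a 3ε-well-supported Nash equilibrium of the game (A_S, B_S), and (y^R/σ(y^R), x^R/σ(x^R)) is a 3ε-WNE of (A_S, B_S) as well. -/
import Mathlib


open Finset

def InSimplex {I : Type*} [Fintype I] (x : I → ℝ) : Prop :=
  (∀ i, 0 ≤ x i) ∧ ∑ i, x i = 1

def IsWNE {I : Type*} [Fintype I] (R C : Matrix I I ℝ) (ε : ℝ)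
    (x y : I → ℝ) : Prop :=
  (∀ i, 0 < x i → ∀ k, (∑ j, R k j * y j) - ε ≤ ∑ j, R i j * y j) ∧
  (∀ j, 0 < y j → ∀ k, (∑ i, x i * C i k) - ε ≤ ∑ i, x i * C i j)

/-- Row matrix R_S = [[2+A, −2],[−2, 2+Bᵀ]] of the combined game. -/
def mpR {n : ℕ} (A B : Matrix (Fin n) (Fin n) ℝ) :
    Matrix (Fin n ⊕ Fin n) (Fin n ⊕ Fin n) ℝ := fun i j =>
  match i, j with
  | .inl a, .inl b => 2 + A a b
  | .inl _, .inr _ => -2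
  | .inr _, .inl _ => -2
  | .inr a, .inr b => 2 + B b a

/-- Column matrix C_S = [[−2+B, 2],[2, −2+Aᵀ]] of the combined game. -/
def mpC {n : ℕ} (A B : Matrix (Fin n) (Fin n) ℝ) :
    Matrix (Fin n ⊕ Fin n) (Fin n ⊕ Fin n) ℝ := fun i j =>
  match i, j with
  | .inl a, .inl b => -2 + B a b
  | .inl _, .inr _ => 2
  | .inr _, .inl _ => 2
  | .inr a, .inr b => -2 + A b a

private lemma mp_div_key {P Q S ε : ℝ} (h : P - ε ≤ Q) (hS : 1/3 ≤ S) (hε : 0 ≤ ε) :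
    P / S - 3*ε ≤ Q / S := by
  have hS0 : 0 < S := by linarith
  have h1 : P / S ≤ (Q + ε) / S := (div_le_div_iff_of_pos_right hS0).mpr (by linarith)
  have h2 : ε / S ≤ 3 * ε := by rw [div_le_iff₀ hS0]; nlinarith
  have h3 := add_div Q ε S
  linarith

private lemma mpR_rowL {n : ℕ} (A B : Matrix (Fin n) (Fin n) ℝ)
    (y : Fin n ⊕ Fin n → ℝ) (i : Fin n) :
    ∑ j, mpR A B (Sum.inl i) j * y j
      = 2 * (∑ b, y (Sum.inl b)) - 2 * (∑ b, y (Sum.inr b)) + ∑ b, A i b * y (Sum.inl b) := by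
  rw [Fintype.sum_sum_type]
  simp only [mpR, add_mul, neg_mul]
  rw [Finset.sum_add_distrib, Finset.sum_neg_distrib, ← Finset.mul_sum, ← Finset.mul_sum]
  ring

private lemma mpR_rowR {n : ℕ} (A B : Matrix (Fin n) (Fin n) ℝ)
    (y : Fin n ⊕ Fin n → ℝ) (i : Fin n) :
    ∑ j, mpR A B (Sum.inr i) j * y j
      = -2 * (∑ b, y (Sum.inl b)) + 2 * (∑ b, y (Sum.inr b)) + ∑ b, B b i * y (Sum.inr b) := by
  rw [Fintype.sum_sum_type]
  simp only [mpR, add_mul, neg_mul]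
  rw [Finset.sum_neg_distrib, Finset.sum_add_distrib, ← Finset.mul_sum, ← Finset.mul_sum]
  ring

private lemma mpC_colL {n : ℕ} (A B : Matrix (Fin n) (Fin n) ℝ)
    (x : Fin n ⊕ Fin n → ℝ) (j : Fin n) :
    ∑ i, x i * mpC A B i (Sum.inl j)
      = -2 * (∑ a, x (Sum.inl a)) + 2 * (∑ a, x (Sum.inr a)) + ∑ a, x (Sum.inl a) * B a j := by
  rw [Fintype.sum_sum_type]
  simp only [mpC, mul_add, mul_neg, mul_comm _ (2:ℝ), Finset.sum_add_distrib,
    Finset.sum_neg_distrib, ← Finset.mul_sum]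
  ring

private lemma mpC_colR {n : ℕ} (A B : Matrix (Fin n) (Fin n) ℝ)
    (x : Fin n ⊕ Fin n → ℝ) (j : Fin n) :
    ∑ i, x i * mpC A B i (Sum.inr j)
      = 2 * (∑ a, x (Sum.inl a)) - 2 * (∑ a, x (Sum.inr a)) + ∑ a, x (Sum.inr a) * A j a := by
  rw [Fintype.sum_sum_type]
  simp only [mpC, mul_add, mul_neg, mul_comm _ (2:ℝ), Finset.sum_add_distrib,
    Finset.sum_neg_distrib, ← Finset.mul_sum]
  ring

private lemma mp_pos_of_div_pos {a S : ℝ} (hS : 0 < S) (h : 0 < a / S) : 0 < a := by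
  have := mul_pos h hS
  rwa [div_mul_cancel₀ _ (ne_of_gt hS)] at this

/-- if (x,y) is an ε-WNE of the combined game (ε < 1/3) and
each of the four half-masses lies in [1/3, 2/3], then the normalized left
halves form a 3ε-WNE of (A,B) and so do the normalized (yᴿ, xᴿ). -/
theorem mp_combined_restriction_is_wne {n : ℕ}
    (A B : Matrix (Fin n) (Fin n) ℝ)
    (ε : ℝ) (hε0 : 0 ≤ ε) (hε1 : ε < 1/3)
    (x y : Fin n ⊕ Fin n → ℝ) (hx : InSimplex x) (hy : InSimplex y)
    (h : IsWNE (mpR A B) (mpC A B) ε x y)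
    (hxL : (∑ a : Fin n, x (Sum.inl a)) ∈ Set.Icc (1/3 : ℝ) (2/3))
    (hxR : (∑ a : Fin n, x (Sum.inr a)) ∈ Set.Icc (1/3 : ℝ) (2/3))
    (hyL : (∑ a : Fin n, y (Sum.inl a)) ∈ Set.Icc (1/3 : ℝ) (2/3))
    (hyR : (∑ a : Fin n, y (Sum.inr a)) ∈ Set.Icc (1/3 : ℝ) (2/3)) :
    IsWNE A B (3 * ε)
      (fun a => x (Sum.inl a) / ∑ a : Fin n, x (Sum.inl a))
      (fun a => y (Sum.inl a) / ∑ a : Fin n, y (Sum.inl a)) ∧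
    IsWNE A B (3 * ε)
      (fun a => y (Sum.inr a) / ∑ a : Fin n, y (Sum.inr a))
      (fun a => x (Sum.inr a) / ∑ a : Fin n, x (Sum.inr a)) := by
  have hxL0 : (0:ℝ) < ∑ a : Fin n, x (Sum.inl a) := lt_of_lt_of_le (by norm_num) hxL.1
  have hxR0 : (0:ℝ) < ∑ a : Fin n, x (Sum.inr a) := lt_of_lt_of_le (by norm_num) hxR.1
  have hyL0 : (0:ℝ) < ∑ a : Fin n, y (Sum.inl a) := lt_of_lt_of_le (by norm_num) hyL.1
  have hyR0 : (0:ℝ) < ∑ a : Fin n, y (Sum.inr a) := lt_of_lt_of_le (by norm_num) hyR.1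
  constructor
  · constructor
    · intro i hi k
      have hxi : 0 < x (Sum.inl i) := mp_pos_of_div_pos hxL0 hi
      have H := h.1 (Sum.inl i) hxi (Sum.inl k)
      rw [mpR_rowL, mpR_rowL] at H
      have H' : (∑ b, A k b * y (Sum.inl b)) - ε ≤ ∑ b, A i b * y (Sum.inl b) := by linarith
      simp only [← mul_div_assoc, ← Finset.sum_div]
      exact mp_div_key H' hyL.1 hε0
    · intro j hj k
      have hyj : 0 < y (Sum.inl j) := mp_pos_of_div_pos hyL0 hj
      have H := h.2 (Sum.inl j) hyj (Sum.inl k)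
      rw [mpC_colL, mpC_colL] at H
      have H' : (∑ a, x (Sum.inl a) * B a k) - ε ≤ ∑ a, x (Sum.inl a) * B a j := by linarith
      simp only [div_mul_eq_mul_div, ← Finset.sum_div]
      exact mp_div_key H' hxL.1 hε0
  · constructor
    · intro i hi k
      have hyi : 0 < y (Sum.inr i) := mp_pos_of_div_pos hyR0 hi
      have H := h.2 (Sum.inr i) hyi (Sum.inr k)
      rw [mpC_colR, mpC_colR] at H
      have H' : (∑ a, A k a * x (Sum.inr a)) - ε ≤ ∑ a, A i a * x (Sum.inr a) := by
        simp only [mul_comm (A _ _)] ; linarith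
      simp only [← mul_div_assoc, ← Finset.sum_div]
      exact mp_div_key H' hxR.1 hε0
    · intro j hj k
      have hxj : 0 < x (Sum.inr j) := mp_pos_of_div_pos hxR0 hj
      have H := h.1 (Sum.inr j) hxj (Sum.inr k)
      rw [mpR_rowR, mpR_rowR] at H
      have H' : (∑ b, y (Sum.inr b) * B b k) - ε ≤ ∑ b, y (Sum.inr b) * B b j := by
        simp only [mul_comm _ (y _)] at H ; linarith
      simp only [div_mul_eq_mul_div, ← Finset.sum_div]
      exact mp_div_key H' hyR.1 hε0
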